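/- A binary linear code of length 8 and dimension 4 in which every nonzero codeword has weight divisible by 4 contains the all-ones vector (the vector of weight 8). (In fact such a code is the extended Hamming code.) -/

import Mathlib

/-- The weight of a binary word: the number of nonzero coordinates. -/
def codeWeight {n : ℕ} (v : Fin n → ZMod 2) : ℕ :=
  (Finset.univ.filter fun i => v i ≠ 0).card

open LinearMap Finset

/-- The standard dot-product bilinear form on `Fin n → ZMod 2`. -/
def dotForm (n : ℕ) : LinearMap.BilinForm (ZMod 2) (Fin n → ZMod 2) :=
  LinearMap.mk₂ (ZMod 2) (fun v w => ∑ i, v i * w i)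
    (fun v v' w => by simp [add_mul, Finset.sum_add_distrib])
    (fun c v w => by simp [Finset.mul_sum, mul_assoc])
    (fun v w w' => by simp [mul_add, Finset.sum_add_distrib])
    (fun c v w => by simp [Finset.mul_sum]; ring_nf; simp [mul_comm, mul_left_comm])

lemma dotForm_apply {n : ℕ} (v w : Fin n → ZMod 2) :
    dotForm n v w = ∑ i, v i * w i := rfl

lemma dotForm_refl (n : ℕ) : (dotForm n).IsRefl := by
  intro v w h
  simpa [dotForm_apply, mul_comm] using h

lemma dotForm_nondeg (n : ℕ) : (dotForm n).Nondegenerate := by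
  refine ⟨fun v hv => ?_, fun v hv => ?_⟩ <;>
  funext i <;>
  have := hv (Pi.single i 1) <;>
  simpa [dotForm_apply, Pi.single_apply, mul_ite, ite_mul, Finset.sum_ite_eq', Finset.sum_ite_eq] using this

lemma sum_eq_weight {n : ℕ} (v : Fin n → ZMod 2) :
    ∑ i, v i = (codeWeight v : ZMod 2) := by
  have h : ∀ i, v i = if v i ≠ 0 then (1 : ZMod 2) else 0 := by
    intro i; revert v; intro v; generalize v i = x; revert x; decide
  have h2 : (∑ i, v i) = ∑ i, if ¬ v i = 0 then (1 : ZMod 2) else 0 :=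
    Finset.sum_congr rfl fun i _ => by generalize v i = x; revert x; decide
  rw [h2, Finset.sum_boole, codeWeight]

lemma dot_eq_inter {n : ℕ} (v w : Fin n → ZMod 2) :
    dotForm n v w =
      ((Finset.univ.filter fun i => v i ≠ 0) ∩ (Finset.univ.filter fun i => w i ≠ 0)).card := by
  have h : ∀ i, v i * w i = if (v i ≠ 0 ∧ w i ≠ 0) then (1 : ZMod 2) else 0 := by
    intro i; generalize v i = x; generalize w i = y; revert x y; decide
  rw [dotForm_apply, Finset.sum_congr rfl fun i _ => h i]
  rw [← Finset.filter_and]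
  simp [Finset.sum_boole]

lemma weight_add {n : ℕ} (v w : Fin n → ZMod 2) :
    codeWeight (v + w) +
      2 * ((Finset.univ.filter fun i => v i ≠ 0) ∩ (Finset.univ.filter fun i => w i ≠ 0)).card
    = codeWeight v + codeWeight w := by
  classical
  set A := Finset.univ.filter fun i => v i ≠ 0
  set B := Finset.univ.filter fun i => w i ≠ 0
  have hC : (Finset.univ.filter fun i => (v + w) i ≠ 0) = (A ∪ B) \ (A ∩ B) := by
    ext i
    simp only [A, B, Finset.mem_filter, Finset.mem_sdiff, Finset.mem_union, Finset.mem_inter,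
      Finset.mem_univ, true_and, Pi.add_apply]
    generalize v i = x; generalize w i = y; revert x y; decide
  have hsub : A ∩ B ⊆ A ∪ B := (Finset.inter_subset_left).trans Finset.subset_union_left
  have h1 : (A ∪ B).card + (A ∩ B).card = A.card + B.card :=
    Finset.card_union_add_card_inter A B
  have h2 : (A ∩ B).card ≤ (A ∪ B).card := Finset.card_le_card hsub
  unfold codeWeight
  rw [hC, Finset.card_sdiff_of_subset hsub,
    show (Finset.univ.filter fun i => v i ≠ 0) = A from rfl,
    show (Finset.univ.filter fun i => w i ≠ 0) = B from rfl]
  omega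

/-- A binary linear code of length 8 and dimension 4 in which every nonzero codeword
has weight divisible by 4 contains the all-ones vector (the vector of weight 8). -/
theorem all_ones_mem_of_doubly_even_code
    (V : Submodule (ZMod 2) (Fin 8 → ZMod 2))
    (hdim : Module.finrank (ZMod 2) V = 4)
    (hweight : ∀ v ∈ V, v ≠ 0 → 4 ∣ codeWeight v) :
    (fun _ => 1 : Fin 8 → ZMod 2) ∈ V := by
  classical
  have hw : ∀ v ∈ V, 4 ∣ codeWeight v := by
    intro v hv
    by_cases h : v = 0
    · subst h; simp [codeWeight]
    · exact hweight v hv h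
  -- V is self-orthogonal
  have hle : V ≤ (dotForm 8).orthogonal V := by
    intro v hv
    rw [LinearMap.BilinForm.mem_orthogonal_iff]
    intro w hw'
    have h1 := hw w hw'
    have h2 := hw v hv
    have h3 := hw (w + v) (V.add_mem hw' hv)
    have hkey := weight_add w v
    have : 2 ∣ ((Finset.univ.filter fun i => w i ≠ 0) ∩
        (Finset.univ.filter fun i => v i ≠ 0)).card := by omega
    show dotForm 8 w v = 0
    rw [dot_eq_inter]
    exact (ZMod.natCast_eq_zero_iff _ 2).mpr this
  -- equality of V with its orthogonal by dimension count
  have hfr : Module.finrank (ZMod 2) ((dotForm 8).orthogonal V) = 4 := by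
    rw [LinearMap.BilinForm.finrank_orthogonal (dotForm_nondeg 8)]
    rw [hdim, Module.finrank_fin_fun]
  have heq : V = (dotForm 8).orthogonal V :=
    Submodule.eq_of_le_of_finrank_le hle (by rw [hfr, hdim])
  rw [heq, LinearMap.BilinForm.mem_orthogonal_iff]
  intro w hw'
  show dotForm 8 w (fun _ => 1) = 0
  have : dotForm 8 w (fun _ => 1) = ∑ i, w i := by
    simp [dotForm_apply]
  rw [this, sum_eq_weight]
  have := hw w hw'
  exact (ZMod.natCast_eq_zero_iff _ 2).mpr (dvd_trans ⟨2, rfl⟩ this)
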